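/- Let B̂ : ℝ³ → ℝ³ be a linear map whose eigenvalues are λ, δ, and the conjugate of δ, where λ > 1 is a positive real number, δ is a complex number with Im(δ) > 0, and |δ| < λ. Set t = δ/λ and η = |arctan((1 − Re(t)) / Im(t))|, and assume η ≤ 1. Suppose z_1, …, z_M ∈ ℝ³ are vectors such that: (i) each z_i lies in the positive half-space E corresponding to λ, i.e., the projection of z_i onto the one-dimensional λ-eigenspace along the B̂-invariant complement is a positive multiple of a fixed eigenvector v for λ; (ii) the conical hull Ĉ = { Σ ε_i z_i : ε_i ≥ 0 } satisfies B̂(Ĉ) ⊆ Ĉ; and (iii) Ĉ is non-degenerate, i.e., the vectors z_1, …, z_M span ℝ³. Then M ≥ 2π/(3η). -/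

import Mathlib

open Polynomial

noncomputable section InvariantConeAux

open Real

namespace ICSB

/-- support evaluation of a planar point `z` in direction `φ`. -/
def fz (z : ℂ) (φ : ℝ) : ℝ := (z * Complex.exp (-(φ:ℂ) * Complex.I)).re

lemma fz_eq (z : ℂ) (φ : ℝ) : fz z φ = z.re * Real.cos φ + z.im * Real.sin φ := by
  have h : -(φ:ℂ) * Complex.I = ((-φ : ℝ) : ℂ) * Complex.I := by push_cast; ring
  simp only [fz, h]
  rw [Complex.mul_re]
  rw [Complex.exp_ofReal_mul_I_re, Complex.exp_ofReal_mul_I_im]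
  simp [Real.cos_neg, Real.sin_neg]

lemma fz_add (z w : ℂ) (φ : ℝ) : fz (z + w) φ = fz z φ + fz w φ := by
  simp [fz, add_mul]

lemma fz_period (z : ℂ) (φ : ℝ) : fz z (φ + 2*Real.pi) = fz z φ := by
  simp [fz_eq, Real.cos_add_two_pi, Real.sin_add_two_pi]

lemma fz_add_pi (z : ℂ) (φ : ℝ) : fz z (φ + Real.pi) = - fz z φ := by
  simp [fz_eq, Real.cos_add_pi, Real.sin_add_pi]; ring

lemma fz_polar (z : ℂ) (φ : ℝ) :
    fz z φ = ‖z‖ * Real.cos (φ - z.arg) := by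
  by_cases h : z = 0
  · simp [h, fz]
  · rw [fz_eq, Real.cos_sub]
    rw [Complex.cos_arg h, Complex.sin_arg]
    have : ‖z‖ ≠ 0 := by simpa using h
    field_simp

lemma fz_le_abs (z : ℂ) (φ : ℝ) : fz z φ ≤ ‖z‖ := by
  rw [fz_polar]
  calc ‖z‖ * Real.cos (φ - z.arg) ≤ ‖z‖ * 1 := by
        exact mul_le_mul_of_nonneg_left (Real.cos_le_one _) (norm_nonneg z)
  _ = ‖z‖ := mul_one _

lemma fz_continuous (z : ℂ) : Continuous (fz z) := by
  have : fz z = fun φ => z.re * Real.cos φ + z.im * Real.sin φ := funext (fz_eq z)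
  rw [this]
  fun_prop

variable (Z : Finset ℂ) (hZ : Z.Nonempty)

/-- support function of the finite set `Z`. -/
def gg (φ : ℝ) : ℝ := Z.sup' hZ (fun z => fz z φ)

lemma le_gg {z : ℂ} (hz : z ∈ Z) (φ : ℝ) : fz z φ ≤ gg Z hZ φ :=
  Finset.le_sup' (fun z => fz z φ) hz

lemma gg_exists (φ : ℝ) : ∃ z ∈ Z, fz z φ = gg Z hZ φ := by
  obtain ⟨b, hb, he⟩ := Finset.exists_mem_eq_sup' hZ (fun z => fz z φ)
  exact ⟨b, hb, he.symm⟩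

lemma gg_period (φ : ℝ) : gg Z hZ (φ + 2*Real.pi) = gg Z hZ φ := by
  unfold gg
  congr 1
  funext z
  exact fz_period z φ


lemma trig_combo (x w y : ℝ) :
    Real.sin (y - x) * Real.cos w = Real.sin (y - w) * Real.cos x + Real.sin (w - x) * Real.cos y ∧
    Real.sin (y - x) * Real.sin w = Real.sin (y - w) * Real.sin x + Real.sin (w - x) * Real.sin y := by
  constructor <;>
  · simp only [Real.sin_sub, Real.cos_sub]
    ring

lemma fz_combo (z : ℂ) (x w y : ℝ) :
    Real.sin (y - x) * fz z w = Real.sin (y - w) * fz z x + Real.sin (w - x) * fz z y := by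
  obtain ⟨h1, h2⟩ := trig_combo x w y
  simp only [fz_eq]
  linear_combination z.re * h1 + z.im * h2

/-- convexity of the argmax set : if `z` is maximal at `x` and `y` with `y - x < π`,
then it is also maximal at every point between. -/
lemma maxset_convex {z : ℂ} (hz : z ∈ Z) {x w y : ℝ}
    (hxw : x ≤ w) (hwy : w ≤ y) (hlen : y - x < Real.pi)
    (hx : fz z x = gg Z hZ x) (hy : fz z y = gg Z hZ y) :
    fz z w = gg Z hZ w := by
  rcases eq_or_lt_of_le (hxw.trans hwy) with h | hlt
  · -- x = y, so w = x
    have hwx : w = x := le_antisymm (h ▸ hwy) hxw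
    rw [hwx]; exact hx
  · have hsin : 0 < Real.sin (y - x) :=
      Real.sin_pos_of_pos_of_lt_pi (by linarith) hlen
    have hp : 0 ≤ Real.sin (y - w) :=
      Real.sin_nonneg_of_nonneg_of_le_pi (by linarith) (by linarith)
    have hq : 0 ≤ Real.sin (w - x) :=
      Real.sin_nonneg_of_nonneg_of_le_pi (by linarith) (by linarith)
    obtain ⟨z', hz', hz'e⟩ := gg_exists Z hZ w
    have key1 := fz_combo z' x w y
    have key2 := fz_combo z x w y
    have hle1 : fz z' x ≤ fz z x := hx ▸ le_gg Z hZ hz' x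
    have hle2 : fz z' y ≤ fz z y := hy ▸ le_gg Z hZ hz' y
    have : Real.sin (y - x) * fz z' w ≤ Real.sin (y - x) * fz z w := by
      rw [key1, key2]
      have := mul_le_mul_of_nonneg_left hle1 hp
      have := mul_le_mul_of_nonneg_left hle2 hq
      linarith
    have hle : fz z' w ≤ fz z w := le_of_mul_le_mul_left this hsin
    have := le_gg Z hZ hz w
    rw [← hz'e] at this ⊢
    exact le_antisymm hle this |>.symm


/-- the comparison function `u`. -/
def UU (TE : ℝ) (w : ℝ) : ℝ := w - Real.log (Real.cos w) / TE

lemma UU_hasDeriv (TE : ℝ) {w : ℝ} (hw : w ∈ Set.Ioo (-(Real.pi/2)) (Real.pi/2)) :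
    HasDerivAt (UU TE) (1 + Real.tan w / TE) w := by
  have hcos : 0 < Real.cos w := Real.cos_pos_of_mem_Ioo hw
  have h1 : HasDerivAt Real.cos (-Real.sin w) w := Real.hasDerivAt_cos w
  have h2 : HasDerivAt (fun x => Real.log (Real.cos x)) (-Real.sin w / Real.cos w) w :=
    h1.log (ne_of_gt hcos)
  have h3 := (hasDerivAt_id w).sub (h2.div_const TE)
  have : 1 - -Real.sin w / Real.cos w / TE = 1 + Real.tan w / TE := by
    rw [Real.tan_eq_sin_div_cos]; ring
  rw [this] at h3
  exact h3

lemma UU_contOn (TE : ℝ) {lo hi : ℝ} (hlo : -(Real.pi/2) < lo) (hhi : hi < Real.pi/2) :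
    ContinuousOn (UU TE) (Set.Icc lo hi) := by
  intro x hx
  have hx' : x ∈ Set.Ioo (-(Real.pi/2)) (Real.pi/2) :=
    ⟨lt_of_lt_of_le hlo hx.1, lt_of_le_of_lt hx.2 hhi⟩
  exact (UU_hasDeriv TE hx').continuousAt.continuousWithinAt

lemma UU_anti (TE : ℝ) (hTE : 0 < TE) {p q : ℝ} (hp : -(Real.pi/2) < p) (hpq : p ≤ q)
    (hq : q ≤ -(Real.arctan TE)) : UU TE q ≤ UU TE p := by
  rcases eq_or_lt_of_le hpq with h | h
  · rw [h]
  · have hη : 0 < Real.arctan TE := by simpa using Real.arctan_strictMono hTE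
    have hη2 : Real.arctan TE < Real.pi/2 := Real.arctan_lt_pi_div_two TE
    have hqlt : q < Real.pi/2 := by linarith
    have hanti : StrictAntiOn (UU TE) (Set.Icc p q) := by
      apply strictAntiOn_of_deriv_neg (convex_Icc p q) (UU_contOn TE hp hqlt)
      intro x hx
      rw [interior_Icc] at hx
      have hx' : x ∈ Set.Ioo (-(Real.pi/2)) (Real.pi/2) := ⟨by linarith [hx.1], by linarith [hx.2]⟩
      rw [(UU_hasDeriv TE hx').deriv]
      have htan : Real.tan x < Real.tan (-(Real.arctan TE)) := by
        apply Real.strictMonoOn_tan ⟨by linarith [hx.1], by linarith [hx.2]⟩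
          ⟨by linarith, by linarith⟩
        linarith [hx.2]
      rw [Real.tan_neg, Real.tan_arctan] at htan
      have : Real.tan x / TE < -1 := by
        rw [div_lt_iff₀ hTE]; linarith
      linarith
    exact le_of_lt (hanti ⟨le_refl p, le_of_lt h⟩ ⟨le_of_lt h, le_refl q⟩ h)

lemma UU_mono (TE : ℝ) (hTE : 0 < TE) {p q : ℝ} (hp : -(Real.arctan TE) ≤ p) (hpq : p ≤ q)
    (hq : q ≤ Real.arctan TE) : UU TE p ≤ UU TE q := by
  rcases eq_or_lt_of_le hpq with h | h
  · rw [h]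
  · have hη2 : Real.arctan TE < Real.pi/2 := Real.arctan_lt_pi_div_two TE
    have hmono : StrictMonoOn (UU TE) (Set.Icc p q) := by
      apply strictMonoOn_of_deriv_pos (convex_Icc p q)
        (UU_contOn TE (by linarith) (by linarith))
      intro x hx
      rw [interior_Icc] at hx
      have hx' : x ∈ Set.Ioo (-(Real.pi/2)) (Real.pi/2) := ⟨by linarith [hx.1], by linarith [hx.2]⟩
      rw [(UU_hasDeriv TE hx').deriv]
      have htan : Real.tan (-(Real.arctan TE)) < Real.tan x := by
        apply Real.strictMonoOn_tan ⟨by linarith, by linarith⟩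
          ⟨by linarith [hx.1], by linarith [hx.2]⟩
        linarith [hx.1]
      rw [Real.tan_neg, Real.tan_arctan] at htan
      have : -1 < Real.tan x / TE := by
        rw [lt_div_iff₀ hTE]; linarith
      linarith
    exact le_of_lt (hmono ⟨le_refl p, le_of_lt h⟩ ⟨le_of_lt h, le_refl q⟩ h)

/-- key elementary inequality : `u(b) - u(a) ≤ 2η` for `-π/2 < a ≤ b ≤ η`. -/
lemma UU_bound (TE : ℝ) (hTE : 0 < TE) {a b : ℝ} (ha : -(Real.pi/2) < a) (hab : a ≤ b)
    (hb : b ≤ Real.arctan TE) : UU TE b - UU TE a ≤ 2 * Real.arctan TE := by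
  have hη : 0 < Real.arctan TE := by simpa using Real.arctan_strictMono hTE
  have hUη : UU TE (Real.arctan TE) - UU TE (-(Real.arctan TE)) = 2 * Real.arctan TE := by
    unfold UU
    rw [Real.cos_neg]
    ring
  by_cases hcase : b ≤ -(Real.arctan TE)
  · have := UU_anti TE hTE ha hab hcase
    linarith
  · push_neg at hcase
    have h1 : UU TE b ≤ UU TE (Real.arctan TE) := UU_mono TE hTE (le_of_lt hcase) hb (le_refl _)
    have h2 : UU TE (-(Real.arctan TE)) ≤ UU TE a := by
      by_cases hA : a ≤ -(Real.arctan TE)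
      · exact UU_anti TE hTE ha (le_refl a) hA |>.trans_eq rfl |> fun h => by
          have := UU_anti TE hTE ha hA (le_refl _)
          linarith
      · push_neg at hA
        exact UU_mono TE hTE (le_refl _) (le_of_lt hA) (by linarith)
    linarith


lemma fz_mul_t (t z : ℂ) (φ : ℝ) :
    fz (t * z) φ = t.re * fz z φ + t.im * (z.re * Real.sin φ - z.im * Real.cos φ) := by
  simp only [fz_eq, Complex.mul_re, Complex.mul_im]
  ring

lemma sin_polar (z : ℂ) (φ : ℝ) :
    z.re * Real.sin φ - z.im * Real.cos φ = ‖z‖ * Real.sin (φ - z.arg) := by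
  by_cases h : z = 0
  · simp [h]
  · rw [Real.sin_sub, Complex.cos_arg h, Complex.sin_arg]
    have : ‖z‖ ≠ 0 := by simpa using h
    field_simp

/-- extraction of the normalized angle representative at a maximizer. -/
lemma repr_lemma (t : ℂ) (him : 0 < t.im) (hre : t.re < 1)
    (HG1 : ∀ z ∈ Z, ∀ φ : ℝ, fz (t * z) φ ≤ gg Z hZ φ)
    (hGpos : ∀ φ, 0 < gg Z hZ φ)
    {z : ℂ} (hz : z ∈ Z) {φ : ℝ} (hmax : fz z φ = gg Z hZ φ) :
    ∃ α : ℝ, ∃ k : ℤ, φ - z.arg - 2*Real.pi*k = α ∧ -(Real.pi/2) < α ∧ α < Real.pi/2 ∧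
      α ≤ Real.arctan ((1 - t.re)/t.im) ∧
      ‖z‖ * Real.cos α = gg Z hZ φ ∧ 0 < ‖z‖ := by
  have hπ := Real.pi_pos
  set r := ‖z‖ with hr
  set ψ := z.arg with hψ
  have hrpos : 0 < r := by
    have h1 : fz z φ ≤ r := fz_le_abs z φ
    have := hGpos φ
    rw [← hmax] at this
    linarith
  set k : ℤ := round ((φ - ψ)/(2*Real.pi)) with hk
  set α : ℝ := φ - ψ - 2*Real.pi*k with hα
  have hαball : |α| ≤ Real.pi := by
    have h1 : |(φ - ψ)/(2*Real.pi) - k| ≤ 1/2 := abs_sub_round _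
    have h2 : α = ((φ - ψ)/(2*Real.pi) - k) * (2*Real.pi) := by
      rw [hα, sub_mul, div_mul_cancel₀ _ (by positivity)]; ring
    rw [h2, abs_mul]
    have : |(2*Real.pi : ℝ)| = 2*Real.pi := abs_of_pos (by linarith)
    rw [this]
    nlinarith [h1]
  have hcosα : Real.cos α = Real.cos (φ - ψ) := by
    have : α = (φ - ψ) - k * (2*Real.pi) := by rw [hα]; ring
    rw [this, Real.cos_sub_int_mul_two_pi]
  have hsinα : Real.sin α = Real.sin (φ - ψ) := by
    have : φ - ψ = α + k * (2*Real.pi) := by rw [hα]; ring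
    rw [this, Real.sin_add_int_mul_two_pi]
  have hcoseq : r * Real.cos α = gg Z hZ φ := by
    rw [hcosα, ← fz_polar, hmax]
  have hcospos : 0 < Real.cos α := by
    have := hGpos φ
    nlinarith
  have hα2 : -(Real.pi/2) < α ∧ α < Real.pi/2 := by
    constructor
    · by_contra h
      push_neg at h
      have h1 : Real.cos α ≤ 0 := by
        have : Real.cos α = Real.cos (-α) := (Real.cos_neg α).symm
        rw [this]
        apply Real.cos_nonpos_of_pi_div_two_le_of_le (by linarith)
        have := abs_le.mp hαball
        linarith [this.1]
      linarith
    · by_contra h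
      push_neg at h
      have h1 : Real.cos α ≤ 0 := by
        apply Real.cos_nonpos_of_pi_div_two_le_of_le h
        have := abs_le.mp hαball
        linarith [this.2]
      linarith
  -- the key invariance inequality
  have hineq : t.im * (r * Real.sin α) ≤ (1 - t.re) * (r * Real.cos α) := by
    have h1 := HG1 z hz φ
    rw [fz_mul_t, hmax, sin_polar] at h1
    rw [hsinα, hcosα]
    have hgg : r * Real.cos (φ - ψ) = gg Z hZ φ := by rw [← hcosα]; exact hcoseq
    rw [← hψ, ← hr] at h1
    nlinarith [h1, hgg]
  have htan : Real.tan α ≤ (1 - t.re)/t.im := by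
    rw [Real.tan_eq_sin_div_cos]
    rw [div_le_div_iff₀ hcospos him]
    nlinarith [hineq]
  have hαη : α ≤ Real.arctan ((1 - t.re)/t.im) := by
    have := Real.arctan_tan hα2.1 hα2.2
    calc α = Real.arctan (Real.tan α) := this.symm
    _ ≤ _ := Real.arctan_strictMono.monotone htan
  exact ⟨α, k, rfl, hα2.1, hα2.2, hαη, hcoseq, hrpos⟩

/-- the bridge estimate across a single vertex arc. -/
lemma bridge (t : ℂ) (him : 0 < t.im) (hre : t.re < 1)
    (HG1 : ∀ z ∈ Z, ∀ φ : ℝ, fz (t * z) φ ≤ gg Z hZ φ)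
    (hGpos : ∀ φ, 0 < gg Z hZ φ)
    {z : ℂ} (hz : z ∈ Z) {x y : ℝ} (hxy : x ≤ y) (hlen : y - x < Real.pi)
    (hx : fz z x = gg Z hZ x) (hy : fz z y = gg Z hZ y) :
    (y - Real.log (gg Z hZ y) / ((1 - t.re)/t.im)) -
      (x - Real.log (gg Z hZ x) / ((1 - t.re)/t.im)) ≤
      2 * Real.arctan ((1 - t.re)/t.im) := by
  have hπ := Real.pi_pos
  set TE := (1 - t.re)/t.im with hTE
  have hTEpos : 0 < TE := div_pos (by linarith) him
  obtain ⟨αx, kx, ex, hax1, hax2, haxη, hgx, hr⟩ :=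
    repr_lemma Z hZ t him hre HG1 hGpos hz hx
  obtain ⟨αy, ky, ey, hay1, hay2, hayη, hgy, -⟩ :=
    repr_lemma Z hZ t him hre HG1 hGpos hz hy
  -- same branch
  have hbranch : αy - αx = y - x := by
    have h1 : (y - x) - (αy - αx) = 2*Real.pi*(ky - kx) := by
      push_cast
      linarith [ex, ey]
    have h2 : ky = kx := by
      by_contra hne
      rcases lt_or_gt_of_ne hne with h | h
      · have h3 : ky + 1 ≤ kx := h
        have h4 : (ky : ℝ) + 1 ≤ (kx : ℝ) := by exact_mod_cast h3
        nlinarith [h1, hπ, h4]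
      · have h3 : kx + 1 ≤ ky := h
        have h4 : (kx : ℝ) + 1 ≤ (ky : ℝ) := by exact_mod_cast h3
        nlinarith [h1, hπ, h4]
    rw [h2] at h1
    simp at h1
    linarith
  have hcosx : 0 < Real.cos αx := by nlinarith [hGpos x]
  have hcosy : 0 < Real.cos αy := by nlinarith [hGpos y]
  have hlogx : Real.log (gg Z hZ x) = Real.log (‖z‖) + Real.log (Real.cos αx) := by
    rw [← hgx, Real.log_mul (ne_of_gt hr) (ne_of_gt hcosx)]
  have hlogy : Real.log (gg Z hZ y) = Real.log (‖z‖) + Real.log (Real.cos αy) := by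
    rw [← hgy, Real.log_mul (ne_of_gt hr) (ne_of_gt hcosy)]
  have hkey : (y - Real.log (gg Z hZ y) / TE) - (x - Real.log (gg Z hZ x) / TE)
      = UU TE αy - UU TE αx := by
    rw [hlogx, hlogy]
    unfold UU
    linear_combination (-1 : ℝ) * hbranch
  rw [hkey]
  exact UU_bound TE hTEpos hax1 (by linarith) hayη


lemma hit_lemma (d : ℝ) (hd : 0 < d) (y c : ℝ) (hyc : y ≤ c) :
    ∃ n : ℕ, c ≤ y + n*d ∧ y + n*d ≤ c + d := by
  refine ⟨⌈(c - y)/d⌉₊, ?_, ?_⟩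
  · have h1 : (c - y)/d ≤ ⌈(c - y)/d⌉₊ := Nat.le_ceil _
    rw [div_le_iff₀ hd] at h1
    linarith
  · have h0 : (0:ℝ) ≤ (c - y)/d := div_nonneg (by linarith) (le_of_lt hd)
    have h1 : (⌈(c - y)/d⌉₊ : ℝ) < (c - y)/d + 1 := Nat.ceil_lt_add_one h0
    rw [← sub_lt_iff_lt_add] at h1
    have h2 : ((⌈(c - y)/d⌉₊ : ℝ) - 1) * d < ((c - y)/d) * d := by
      apply mul_lt_mul_of_pos_right _ hd
      linarith
    rw [div_mul_cancel₀ _ (ne_of_gt hd)] at h2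
    nlinarith

lemma fz_scaled (R β φ : ℝ) :
    fz ((R:ℂ) * Complex.exp ((β:ℂ) * Complex.I)) φ = R * Real.cos (φ - β) := by
  unfold fz
  rw [mul_assoc, ← Complex.exp_add]
  have h : (β:ℂ) * Complex.I + -(φ:ℂ) * Complex.I = ((β - φ : ℝ) : ℂ) * Complex.I := by
    push_cast; ring
  rw [h]
  rw [Complex.re_ofReal_mul, Complex.exp_ofReal_mul_I_re]
  rw [show β - φ = -(φ - β) by ring, Real.cos_neg]

lemma pow_mul_polar (t z : ℂ) (ht : t ≠ 0) (hz : z ≠ 0) (n : ℕ) :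
    t^n * z = ((‖t‖ ^ n * ‖z‖ : ℝ) : ℂ) *
      Complex.exp (((n * t.arg + z.arg : ℝ):ℂ) * Complex.I) := by
  conv_lhs => rw [← Complex.norm_mul_exp_arg_mul_I t, ← Complex.norm_mul_exp_arg_mul_I z]
  rw [mul_pow, ← Complex.exp_nat_mul]
  push_cast
  ring_nf
  rw [Complex.exp_add]
  ring_nf

lemma fz_pow_polar (t z : ℂ) (ht : t ≠ 0) (hz : z ≠ 0) (n : ℕ) (φ : ℝ) :
    fz (t^n * z) φ = ‖t‖ ^ n * ‖z‖ *
      Real.cos (φ - z.arg - n * t.arg) := by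
  rw [pow_mul_polar t z ht hz n, fz_scaled]
  congr 2
  ring

/-- positivity of the support function, via forward rotation of one nonzero point. -/
lemma gg_pos (t : ℂ) (him : 0 < t.im)
    (hnz : ∃ z ∈ Z, z ≠ 0)
    (HGn : ∀ n : ℕ, ∀ z ∈ Z, ∀ φ : ℝ, fz (t^n * z) φ ≤ gg Z hZ φ) :
    ∀ φ, 0 < gg Z hZ φ := by
  intro φ
  have hπ := Real.pi_pos
  obtain ⟨z₀, hz₀Z, hz₀⟩ := hnz
  have ht : t ≠ 0 := by
    intro h
    rw [h] at him
    simp at him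
  set θ := t.arg with hθdef
  have hθ1 : 0 < θ := by
    rcases lt_or_eq_of_le (Complex.arg_nonneg_iff.mpr (le_of_lt him)) with h | h
    · exact h
    · exfalso
      have := Complex.arg_eq_zero_iff.mp h.symm
      linarith [this.2, him]
  have hθ2 : θ < Real.pi := by
    rcases lt_or_eq_of_le (Complex.arg_le_pi t) with h | h
    · exact h
    · exfalso
      have := Complex.arg_eq_pi_iff.mp h
      linarith [this.2, him]
  set ψ := z₀.arg with hψdef
  set r := ‖z₀‖ with hrdef
  have hrpos : 0 < r := by
    simp only [hrdef]
    exact (norm_pos_iff.mpr hz₀)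
  have hρpos : 0 < ‖t‖ := norm_pos_iff.mpr ht
  -- choose m with φ - θ/2 + 2πm ≥ ψ
  obtain ⟨m, hm⟩ := exists_nat_ge ((ψ - φ + θ/2)/(2*Real.pi))
  have hm' : ψ ≤ φ - θ/2 + 2*Real.pi*m := by
    rw [div_le_iff₀ (by linarith)] at hm
    nlinarith
  obtain ⟨n, hn1, hn2⟩ := hit_lemma θ hθ1 ψ (φ - θ/2 + 2*Real.pi*m) hm'
  set q := φ - ψ - n*θ + 2*Real.pi*m with hqdef
  have hq1 : -(θ/2) ≤ q := by simp only [hqdef]; linarith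
  have hq2 : q ≤ θ/2 := by simp only [hqdef]; linarith
  have hcosq : Real.cos (φ - ψ - n*θ) = Real.cos q := by
    have heq : φ - ψ - n*θ = q + ((-(m:ℤ) : ℤ) : ℝ) * (2*Real.pi) := by
      rw [Int.cast_neg, Int.cast_natCast]
      simp only [hqdef]; ring
    rw [heq, Real.cos_add_int_mul_two_pi]
  have hcosθ2 : 0 < Real.cos (θ/2) := by
    apply Real.cos_pos_of_mem_Ioo
    constructor
    · linarith
    · linarith
  have hcosge : Real.cos (θ/2) ≤ Real.cos q := by
    rw [← Real.cos_abs q]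
    apply Real.cos_le_cos_of_nonneg_of_le_pi (abs_nonneg q) (by linarith)
    rw [abs_le]
    constructor <;> linarith
  have hG := HGn n z₀ hz₀Z φ
  rw [fz_pow_polar t z₀ ht hz₀ n φ] at hG
  rw [← hψdef, ← hrdef, ← hθdef] at hG
  rw [hcosq] at hG
  have hval : 0 < ‖t‖ ^ n * r * Real.cos q :=
    mul_pos (mul_pos (pow_pos hρpos n) hrpos) (lt_of_lt_of_le hcosθ2 hcosge)
  linarith


set_option maxHeartbeats 1000000 in
/-- the planar core estimate: a `t`-invariant polygon needs at least `π/η` vertices. -/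
lemma planar_core (t : ℂ) (him : 0 < t.im) (hre : t.re < 1)
    (hnz : ∃ z ∈ Z, z ≠ 0)
    (hη1 : Real.arctan ((1 - t.re)/t.im) ≤ 1)
    (HGn : ∀ n : ℕ, ∀ z ∈ Z, ∀ φ : ℝ, fz (t^n * z) φ ≤ gg Z hZ φ) :
    2 * Real.pi ≤ 2 * Real.arctan ((1 - t.re)/t.im) * (Z.card + 1) := by
  have hπ := Real.pi_pos
  have hπgt : (3.141592 : ℝ) < Real.pi := Real.pi_gt_d6
  have hπlt : Real.pi < 3.15 := Real.pi_lt_d2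
  set TE := (1 - t.re)/t.im with hTEdef
  have hTEpos : 0 < TE := div_pos (by linarith) him
  set η := Real.arctan TE with hηdef
  have hηpos : 0 < η := by simpa [hηdef] using Real.arctan_strictMono hTEpos
  have hηlt : η < Real.pi/2 := Real.arctan_lt_pi_div_two TE
  set G := gg Z hZ with hGdef
  have hGpos : ∀ φ, 0 < G φ := gg_pos Z hZ t him hnz HGn
  have HG1 : ∀ z ∈ Z, ∀ φ : ℝ, fz (t * z) φ ≤ G φ := by
    intro z hz φ
    have := HGn 1 z hz φ
    rwa [pow_one] at this
  set PHI : ℝ → ℝ := fun w => w - Real.log (G w) / TE with hPHIdef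
  have hbridge : ∀ z ∈ Z, ∀ x y : ℝ, x ≤ y → y - x < Real.pi →
      fz z x = G x → fz z y = G y → PHI y - PHI x ≤ 2*η := by
    intro z hz x y hxy hlen hx hy
    have := bridge Z hZ t him hre HG1 hGpos hz hxy hlen hx hy
    simpa [hPHIdef, hηdef, hTEdef] using this
  -- closedness of maximizer sets
  have hCiff : ∀ z ∈ Z, ∀ w : ℝ, (fz z w = G w ↔ ∀ z' ∈ Z, fz z' w ≤ fz z w) := by
    intro z hz w
    constructor
    · intro h z' hz'
      rw [h]
      exact le_gg Z hZ hz' w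
    · intro h
      refine le_antisymm (le_gg Z hZ hz w) ?_
      exact Finset.sup'_le hZ _ h
  have hCclosed : ∀ z ∈ Z, IsClosed {w : ℝ | fz z w = G w} := by
    intro z hz
    have : {w : ℝ | fz z w = G w} = ⋂ z' ∈ Z, {w : ℝ | fz z' w ≤ fz z w} := by
      ext w
      simp only [Set.mem_setOf_eq, Set.mem_iInter]
      exact hCiff z hz w
    rw [this]
    exact isClosed_biInter fun z' _ => isClosed_le (fz_continuous z') (fz_continuous z)
  -- the "angle dichotomy"
  have hdichot : ∀ z ∈ Z, ∀ x w : ℝ, fz z x = G x → fz z w = G w → x ≤ w →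
      w - x ≤ 2*Real.pi →
      (w - x < Real.pi/2 + η) ∨ (Real.pi < w - x ∧ x + 2*Real.pi - w < Real.pi) := by
    intro z hz x w hx hw hxw h2π
    obtain ⟨αx, kx, ex, hax1, hax2, haxη, -, -⟩ :=
      repr_lemma Z hZ t him hre HG1 hGpos hz hx
    obtain ⟨αw, kw, ew, haw1, haw2, hawη, -, -⟩ :=
      repr_lemma Z hZ t him hre HG1 hGpos hz hw
    have hn : (w - x) - (αw - αx) = 2*Real.pi*((kw : ℝ) - kx) := by
      push_cast
      linarith [ex, ew]
    have hnint : kw - kx = 0 ∨ kw - kx = 1 := by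
      have hb1 : (-1 : ℝ) < (kw : ℝ) - kx := by nlinarith
      have hb2 : ((kw : ℝ) - kx) < 2 := by nlinarith
      have hb1' : (-1 : ℤ) < kw - kx := by exact_mod_cast (by push_cast; linarith : ((-1:ℤ):ℝ) < ((kw - kx : ℤ) : ℝ))
      have hb2' : (kw - kx : ℤ) < 2 := by exact_mod_cast (by push_cast; linarith : (((kw - kx) : ℤ) : ℝ) < ((2:ℤ):ℝ))
      omega
    rcases hnint with h | h
    · left
      have : (kw : ℝ) - kx = 0 := by exact_mod_cast congrArg (fun m : ℤ => (m : ℝ)) h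
      nlinarith
    · right
      have : (kw : ℝ) - kx = 1 := by exact_mod_cast congrArg (fun m : ℤ => (m : ℝ)) h
      constructor
      · nlinarith
      · nlinarith
  -- choice of a direction with a unique maximizer
  obtain ⟨c, hcI, hcgood⟩ : ∃ c ∈ Set.Ioo (0:ℝ) 1,
      ∀ z ∈ Z, ∀ z' ∈ Z, z ≠ z' → fz z c ≠ fz z' c := by
    classical
    set Bad : Set ℝ := ⋃ z ∈ (Z : Set ℂ), ⋃ z' ∈ (Z : Set ℂ),
      {φ : ℝ | z ≠ z' ∧ fz z φ = fz z' φ} with hBaddef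
    have hBadc : Bad.Countable := by
      apply Set.Countable.biUnion (Z.countable_toSet)
      intro z hzZ
      apply Set.Countable.biUnion (Z.countable_toSet)
      intro z' hz'Z
      by_cases hne : z = z'
      · have : {φ : ℝ | z ≠ z' ∧ fz z φ = fz z' φ} = ∅ := by
          ext φ; simp [hne]
        rw [this]; exact Set.countable_empty
      · have hsub : {φ : ℝ | z ≠ z' ∧ fz z φ = fz z' φ} ⊆
            Set.range (fun k : ℤ => (z - z').arg + (2*k+1) * Real.pi / 2) := by
          intro φ hφ
          have hzz' : z - z' ≠ 0 := sub_ne_zero.mpr hne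
          have h0 : fz (z - z') φ = 0 := by
            have : fz (z - z') φ = fz z φ - fz z' φ := by
              simp [fz_eq]; ring
            rw [this, hφ.2]; ring
          rw [fz_polar] at h0
          have habs0 : ‖(z - z')‖ ≠ 0 := norm_ne_zero_iff.mpr hzz'
          have hcos0 : Real.cos (φ - (z - z').arg) = 0 := by
            rcases mul_eq_zero.mp h0 with h | h
            · exact absurd h habs0
            · exact h
          obtain ⟨k, hk⟩ := Real.cos_eq_zero_iff.mp hcos0
          exact ⟨k, by linarith⟩
        exact Set.Countable.mono hsub (Set.countable_range _)
    have hnotsub : ¬ (Set.Ioo (0:ℝ) 1 ⊆ Bad) := by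
      intro hsub
      have h1 : MeasureTheory.volume Bad = 0 := Set.Countable.measure_zero hBadc _
      have h2 : MeasureTheory.volume (Set.Ioo (0:ℝ) 1) ≤ MeasureTheory.volume Bad :=
        MeasureTheory.measure_mono hsub
      rw [Real.volume_Ioo, h1] at h2
      simp at h2
    obtain ⟨c, hcI, hcB⟩ := Set.not_subset.mp hnotsub
    refine ⟨c, hcI, ?_⟩
    intro z hz z' hz' hne heq
    apply hcB
    rw [hBaddef]
    simp only [Set.mem_iUnion]
    exact ⟨z, hz, z', hz', hne, heq⟩
  obtain ⟨z₀, hz₀Z, hz₀c⟩ := gg_exists Z hZ c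
  have hz₀uniq : ∀ z ∈ Z, fz z c = G c → z = z₀ := by
    intro z hz hzc
    by_contra hne
    exact hcgood z hz z₀ hz₀Z hne (by rw [hzc, hz₀c])
  -- the wrap point y*
  set A : Set ℝ := {w : ℝ | fz z₀ w = G w} ∩ Set.Icc (c + Real.pi) (c + 2*Real.pi)
    with hAdef
  have hz₀per : fz z₀ (c + 2*Real.pi) = G (c + 2*Real.pi) := by
    rw [fz_period, hGdef, gg_period]
    exact hz₀c
  have hAne : A.Nonempty := ⟨c + 2*Real.pi, hz₀per, by constructor <;> [linarith; linarith]⟩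
  have hAcomp : IsCompact A := IsCompact.inter_left isCompact_Icc (hCclosed z₀ hz₀Z)
  set ystar := sInf A with hystardef
  have hystarA : ystar ∈ A := hAcomp.sInf_mem hAne
  have hystar1 : fz z₀ ystar = G ystar := hystarA.1
  have hystar2 : c + Real.pi ≤ ystar := hystarA.2.1
  have hystar3 : ystar ≤ c + 2*Real.pi := hystarA.2.2
  have hystar_lb : ∀ w ∈ A, ystar ≤ w := fun w hw => csInf_le hAcomp.bddBelow hw
  have hystar_gt : c + Real.pi < ystar := by
    rcases lt_or_eq_of_le hystar2 with h | h
    · exact h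
    · exfalso
      have h1 : fz z₀ (c + Real.pi) = G (c + Real.pi) := by rw [h]; exact hystar1
      have h2 : fz z₀ (c + Real.pi) = - fz z₀ c := fz_add_pi z₀ c
      have := hGpos (c + Real.pi)
      have := hGpos c
      rw [hz₀c] at h2
      linarith [hGpos (c + Real.pi), hGpos c, h1.symm.trans h2]
  -- "next maximizer" extraction
  have hnext : ∀ s y' : ℝ, s < y' →
      ∃ z₂ ∈ Z, fz z₂ s = G s ∧ ∃ w, s < w ∧ w < y' ∧ fz z₂ w = G w := by
    intro s y' hsy
    by_contra hcon
    push_neg at hcon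
    have hDs : ∀ z ∈ Z, s ∉ closure ({w : ℝ | fz z w = G w} ∩ Set.Ioo s y') := by
      intro z hz hmem
      have hcl : closure ({w : ℝ | fz z w = G w} ∩ Set.Ioo s y') ⊆
          {w : ℝ | fz z w = G w} :=
        closure_minimal (Set.inter_subset_left) (hCclosed z hz) |>.trans (le_refl _)
      have hzs : fz z s = G s := hcl hmem
      have hne : ({w : ℝ | fz z w = G w} ∩ Set.Ioo s y').Nonempty := by
        by_contra hemp
        rw [Set.not_nonempty_iff_eq_empty] at hemp
        rw [hemp, closure_empty] at hmem
        exact hmem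
      obtain ⟨w, hw1, hw2⟩ := hne
      exact hcon z hz hzs w hw2.1 hw2.2 hw1
    have hUopen : IsOpen (⋂ z ∈ Z, (closure ({w : ℝ | fz z w = G w} ∩ Set.Ioo s y'))ᶜ) :=
      isOpen_biInter_finset fun z _ => isClosed_closure.isOpen_compl
    have hsU : s ∈ ⋂ z ∈ Z, (closure ({w : ℝ | fz z w = G w} ∩ Set.Ioo s y'))ᶜ := by
      simp only [Set.mem_iInter, Set.mem_compl_iff]
      exact hDs
    obtain ⟨ε, hεpos, hball⟩ := Metric.isOpen_iff.mp hUopen s hsU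
    set w₀ := s + (min ε (y' - s))/2 with hw₀def
    have hmin : 0 < min ε (y' - s) := lt_min hεpos (by linarith)
    have hw₀1 : s < w₀ := by simp only [hw₀def]; linarith
    have hw₀2 : w₀ < y' := by
      have : (min ε (y' - s))/2 < y' - s := by
        have := min_le_right ε (y' - s)
        linarith
      simp only [hw₀def]; linarith
    have hw₀ball : w₀ ∈ Metric.ball s ε := by
      rw [Metric.mem_ball, Real.dist_eq, abs_of_pos (by linarith)]
      have := min_le_left ε (y' - s)
      simp only [hw₀def]
      linarith
    have hw₀U := hball hw₀ball
    simp only [Set.mem_iInter, Set.mem_compl_iff] at hw₀U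
    obtain ⟨z', hz'Z, hz'max⟩ := gg_exists Z hZ w₀
    exact hw₀U z' hz'Z (subset_closure ⟨hz'max, hw₀1, hw₀2⟩)
  -- the recursive bite decomposition
  have hrec : ∀ n : ℕ, ∀ S : Finset ℂ, S ⊆ Z → S.card ≤ n → z₀ ∉ S →
      ∀ x y : ℝ, c ≤ x → x ≤ y → y ≤ ystar → (∃ z ∈ S, fz z x = G x) →
      (∀ w, x < w → w < y → ∀ z ∈ Z, fz z w = G w → z ∈ S) →
      PHI y - PHI x ≤ 2*η*n := by
    intro n
    induction n with
    | zero =>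
      intro S hSZ hcard hz₀S x y hcx hxy hyst hmax hmid
      obtain ⟨z₁, hz₁S, -⟩ := hmax
      rw [Nat.le_zero, Finset.card_eq_zero] at hcard
      rw [hcard] at hz₁S
      exact absurd hz₁S (Finset.notMem_empty z₁)
    | succ n ih =>
      intro S hSZ hcard hz₀S x y hcx hxy hyst hmax hmid
      obtain ⟨z₁, hz₁S, hz₁x⟩ := hmax
      have hz₁Z : z₁ ∈ Z := hSZ hz₁S
      set T : Set ℝ := {w : ℝ | fz z₁ w = G w} ∩ Set.Icc x (min y (x + 2.7)) with hTdef
      have hTne : T.Nonempty := ⟨x, hz₁x, le_refl x, le_min hxy (by linarith)⟩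
      have hTcomp : IsCompact T := IsCompact.inter_left isCompact_Icc (hCclosed z₁ hz₁Z)
      set s := sSup T with hsdef
      have hsT : s ∈ T := hTcomp.sSup_mem hTne
      have hz₁s : fz z₁ s = G s := hsT.1
      have hxs : x ≤ s := hsT.2.1
      have hsy : s ≤ y := le_trans hsT.2.2 (min_le_left _ _)
      have hscap : s ≤ x + 2.7 := le_trans hsT.2.2 (min_le_right _ _)
      have hbite : PHI s - PHI x ≤ 2*η :=
        hbridge z₁ hz₁Z x s hxs (by linarith) hz₁x hz₁s
      rcases le_or_gt y s with hys | hsy'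
      · have heq : s = y := le_antisymm hsy hys
        rw [heq] at hbite
        have : (0:ℝ) ≤ 2*η*n := by positivity
        push_cast
        linarith
      · have hCLM : ∀ w, s < w → w < y → fz z₁ w ≠ G w := by
          intro w hsw hwy heqw
          have hxw : x ≤ w := le_trans hxs (le_of_lt hsw)
          have hw2π : w - x ≤ 2*Real.pi := by linarith
          rcases hdichot z₁ hz₁Z x w hz₁x heqw hxw hw2π with h | h
          · have hwT : w ∈ T := by
              refine ⟨heqw, hxw, le_min (le_of_lt hwy) ?_⟩
              have : Real.pi/2 + η ≤ 2.7 := by linarith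
              linarith
            have := le_csSup hTcomp.bddAbove hwT
            linarith
          · obtain ⟨hπw, hxw2⟩ := h
            have hz₁x2π : fz z₁ (x + 2*Real.pi) = G (x + 2*Real.pi) := by
              rw [fz_period, hGdef, gg_period]
              exact hz₁x
            have hcw : w ≤ c + 2*Real.pi := by linarith
            have hcmax := maxset_convex Z hZ hz₁Z (x := w) (w := c + 2*Real.pi)
              (y := x + 2*Real.pi) hcw (by linarith) hxw2 heqw hz₁x2π
            have hz₁c : fz z₁ c = G c := by
              have h1 : fz z₁ (c + 2*Real.pi) = fz z₁ c := fz_period z₁ c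
              have h2 : gg Z hZ (c + 2*Real.pi) = gg Z hZ c := gg_period Z hZ c
              rw [h1, h2] at hcmax
              exact hcmax
            have := hz₀uniq z₁ hz₁Z hz₁c
            rw [this] at hz₁S
            exact hz₀S hz₁S
        obtain ⟨z₂, hz₂Z, hz₂s, w', hw'1, hw'2, hw'max⟩ := hnext s y hsy'
        have hz₂S : z₂ ∈ S := hmid w' (lt_of_le_of_lt hxs hw'1) hw'2 z₂ hz₂Z hw'max
        have hz₂ne : z₂ ≠ z₁ := by
          intro h
          exact hCLM w' hw'1 hw'2 (h ▸ hw'max)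
        have htail : PHI y - PHI s ≤ 2*η*n := by
          apply ih (S.erase z₁) (fun a ha => hSZ (Finset.mem_of_mem_erase ha)) ?_
            (fun h => hz₀S (Finset.mem_of_mem_erase h)) s y (le_trans hcx hxs)
            (le_of_lt hsy') hyst
            ⟨z₂, Finset.mem_erase.mpr ⟨hz₂ne, hz₂S⟩, hz₂s⟩ ?_
          · rw [Finset.card_erase_of_mem hz₁S]
            omega
          · intro w hsw hwy zz hzzZ hzzmax
            refine Finset.mem_erase.mpr ⟨?_, hmid w (lt_of_le_of_lt hxs hsw) hwy zz hzzZ hzzmax⟩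
            intro hzz
            exact hCLM w hsw hwy (hzz ▸ hzzmax)
        push_cast
        linarith
  -- first bite from c
  set T₀ : Set ℝ := {w : ℝ | fz z₀ w = G w} ∩ Set.Icc c (min ystar (c + 2.7)) with hT₀def
  have hT₀ne : T₀.Nonempty := ⟨c, hz₀c, le_refl c, le_min (by linarith) (by linarith)⟩
  have hT₀comp : IsCompact T₀ := IsCompact.inter_left isCompact_Icc (hCclosed z₀ hz₀Z)
  set s₀ := sSup T₀ with hs₀def
  have hs₀T : s₀ ∈ T₀ := hT₀comp.sSup_mem hT₀ne
  have hz₀s₀ : fz z₀ s₀ = G s₀ := hs₀T.1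
  have hcs₀ : c ≤ s₀ := hs₀T.2.1
  have hs₀y : s₀ ≤ ystar := le_trans hs₀T.2.2 (min_le_left _ _)
  have hs₀cap : s₀ ≤ c + 2.7 := le_trans hs₀T.2.2 (min_le_right _ _)
  have hbite₀ : PHI s₀ - PHI c ≤ 2*η :=
    hbridge z₀ hz₀Z c s₀ hcs₀ (by linarith) hz₀c hz₀s₀
  have hCLM₀ : ∀ w, s₀ < w → w < ystar → fz z₀ w ≠ G w := by
    intro w hsw hwy heqw
    have hcwle : c ≤ w := le_trans hcs₀ (le_of_lt hsw)
    have hw2π : w - c ≤ 2*Real.pi := by linarith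
    rcases hdichot z₀ hz₀Z c w hz₀c heqw hcwle hw2π with h | h
    · have hwT : w ∈ T₀ := by
        refine ⟨heqw, hcwle, le_min (le_of_lt hwy) ?_⟩
        have : Real.pi/2 + η ≤ 2.7 := by linarith
        linarith
      have := le_csSup hT₀comp.bddAbove hwT
      linarith
    · obtain ⟨hπw, -⟩ := h
      have hwA : w ∈ A := ⟨heqw, by constructor <;> linarith⟩
      have := hystar_lb w hwA
      linarith
  -- assemble the middle bound
  have hmiddle : PHI ystar - PHI c ≤ 2*η*(Z.card) := by
    have hcard1 : 1 ≤ Z.card := Finset.card_pos.mpr hZ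
    rcases le_or_gt ystar s₀ with hys | hs₀y'
    · have heq : s₀ = ystar := le_antisymm hs₀y hys
      rw [heq] at hbite₀
      have : (1:ℝ) ≤ Z.card := by exact_mod_cast hcard1
      nlinarith
    · obtain ⟨z₂, hz₂Z, hz₂s, w', hw'1, hw'2, hw'max⟩ := hnext s₀ ystar hs₀y'
      have hz₂ne : z₂ ≠ z₀ := by
        intro h
        exact hCLM₀ w' hw'1 hw'2 (h ▸ hw'max)
      have htail : PHI ystar - PHI s₀ ≤ 2*η*((Z.erase z₀).card) := by
        apply hrec (Z.erase z₀).card (Z.erase z₀) (Finset.erase_subset z₀ Z) (le_refl _)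
          (Finset.notMem_erase z₀ Z) s₀ ystar hcs₀ (le_of_lt hs₀y') (le_refl ystar)
          ⟨z₂, Finset.mem_erase.mpr ⟨hz₂ne, hz₂Z⟩, hz₂s⟩ ?_
        intro w hsw hwy zz hzzZ hzzmax
        refine Finset.mem_erase.mpr ⟨?_, hzzZ⟩
        intro hzz
        exact hCLM₀ w hsw hwy (hzz ▸ hzzmax)
      have hce : (Z.erase z₀).card = Z.card - 1 := Finset.card_erase_of_mem hz₀Z
      have hcer : ((Z.erase z₀).card : ℝ) = (Z.card : ℝ) - 1 := by
        rw [hce]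
        have : 1 ≤ Z.card := hcard1
        push_cast [Nat.cast_sub this]
        ring
      rw [hcer] at htail
      nlinarith
  -- final bridge and total
  have hfinal : PHI (c + 2*Real.pi) - PHI ystar ≤ 2*η := by
    apply hbridge z₀ hz₀Z ystar (c + 2*Real.pi) hystar3 (by linarith) hystar1 hz₀per
  have htotal : PHI (c + 2*Real.pi) - PHI c = 2*Real.pi := by
    simp only [hPHIdef]
    rw [hGdef]
    rw [gg_period Z hZ c]
    ring
  have hcard1 : (1:ℝ) ≤ (Z.card : ℝ) := by
    exact_mod_cast Finset.card_pos.mpr hZ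
  nlinarith [hmiddle, hfinal, htotal]


lemma fz_sum_smul {M : ℕ} (μ : Fin M → ℝ) (ζ : Fin M → ℂ) (φ : ℝ) :
    fz (∑ j, (μ j : ℂ) * ζ j) φ = ∑ j, μ j * fz (ζ j) φ := by
  unfold fz
  rw [Finset.sum_mul, Complex.re_sum]
  congr 1
  funext j
  rw [mul_assoc, Complex.re_ofReal_mul]

lemma planar_bound (t : ℂ) (him : 0 < t.im) (hre : t.re < 1)
    (hη1 : Real.arctan ((1 - t.re)/t.im) ≤ 1)
    (M : ℕ) (ζ : Fin M → ℂ) (hnz : ∃ i, ζ i ≠ 0)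
    (hconv : ∀ i, ∃ μ : Fin M → ℝ, (∀ j, 0 ≤ μ j) ∧ (∑ j, μ j) = 1 ∧
      t * ζ i = ∑ j, (μ j : ℂ) * ζ j) :
    2 * Real.pi ≤ 2 * Real.arctan ((1 - t.re)/t.im) * (M + 1) := by
  classical
  obtain ⟨i₀, hi₀⟩ := hnz
  have hfin : (Finset.univ : Finset (Fin M)).Nonempty := ⟨i₀, Finset.mem_univ i₀⟩
  set Z : Finset ℂ := Finset.image ζ Finset.univ with hZdef
  have hZ : Z.Nonempty := Finset.Nonempty.image hfin ζ
  choose ν hν0 hν1 hν2 using hconv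
  have hpow : ∀ (n : ℕ) (i : Fin M), ∃ μ : Fin M → ℝ, (∀ j, 0 ≤ μ j) ∧ (∑ j, μ j) = 1 ∧
      t^n * ζ i = ∑ j, (μ j : ℂ) * ζ j := by
    intro n
    induction n with
    | zero =>
      intro i
      refine ⟨fun j => if j = i then 1 else 0, ?_, ?_, ?_⟩
      · intro j
        dsimp only
        split <;> norm_num
      · simp
      · rw [pow_zero, one_mul]
        have hterm : ∀ j, ((if j = i then (1:ℝ) else 0 : ℝ) : ℂ) * ζ j
            = if j = i then ζ j else 0 := by
          intro j; split <;> simp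
        dsimp only
        rw [Finset.sum_congr rfl (fun j _ => hterm j), Finset.sum_ite_eq' Finset.univ i ζ]
        simp
    | succ n ihn =>
      intro i
      obtain ⟨μ, hμ0, hμ1, hμ2⟩ := ihn i
      refine ⟨fun k => ∑ j, μ j * ν j k, ?_, ?_, ?_⟩
      · intro k
        exact Finset.sum_nonneg fun j _ => mul_nonneg (hμ0 j) (hν0 j k)
      · rw [Finset.sum_comm]
        calc ∑ j, ∑ k, μ j * ν j k = ∑ j, μ j * ∑ k, ν j k := by
              congr 1; funext j; rw [Finset.mul_sum]
        _ = ∑ j, μ j := by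
              congr 1; funext j; rw [hν1 j, mul_one]
        _ = 1 := hμ1
      · have h1 : t^(n+1) * ζ i = t * (t^n * ζ i) := by ring
        rw [h1, hμ2, Finset.mul_sum]
        have h2 : ∀ j, t * ((μ j : ℂ) * ζ j) = (μ j : ℂ) * (t * ζ j) := fun j => by ring
        simp_rw [h2, hν2, Finset.mul_sum]
        rw [Finset.sum_comm]
        congr 1
        funext k
        push_cast
        rw [Finset.sum_mul]
        congr 1
        funext j
        ring
  have HGn : ∀ n : ℕ, ∀ z ∈ Z, ∀ φ : ℝ, fz (t^n * z) φ ≤ gg Z hZ φ := by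
    intro n z hzZ φ
    obtain ⟨i, -, hi⟩ := Finset.mem_image.mp hzZ
    obtain ⟨μ, hμ0, hμ1, hμ2⟩ := hpow n i
    rw [← hi, hμ2, fz_sum_smul]
    calc ∑ j, μ j * fz (ζ j) φ ≤ ∑ j, μ j * gg Z hZ φ := by
          apply Finset.sum_le_sum
          intro j _
          exact mul_le_mul_of_nonneg_left
            (le_gg Z hZ (Finset.mem_image_of_mem ζ (Finset.mem_univ j)) φ) (hμ0 j)
    _ = gg Z hZ φ := by rw [← Finset.sum_mul, hμ1, one_mul]
  have hnz' : ∃ z ∈ Z, z ≠ 0 := ⟨ζ i₀, Finset.mem_image_of_mem ζ (Finset.mem_univ i₀), hi₀⟩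
  have hcore := planar_core Z hZ t him hre hnz' hη1 HGn
  have hcard : Z.card ≤ M := by
    calc Z.card ≤ (Finset.univ : Finset (Fin M)).card := Finset.card_image_le
    _ = M := by simp
  have hTEpos : 0 < (1 - t.re)/t.im := div_pos (by linarith) him
  have hηpos : 0 < Real.arctan ((1 - t.re)/t.im) := by
    simpa using Real.arctan_strictMono hTEpos
  have hcard' : (Z.card : ℝ) + 1 ≤ (M : ℝ) + 1 := by
    have : (Z.card : ℝ) ≤ M := by exact_mod_cast hcard
    linarith
  calc 2 * Real.pi ≤ 2 * Real.arctan ((1 - t.re)/t.im) * (Z.card + 1) := hcore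
  _ ≤ 2 * Real.arctan ((1 - t.re)/t.im) * (M + 1) := by nlinarith


lemma eval_charpoly_det (A : Matrix (Fin 3) (Fin 3) ℂ) (a : ℂ) :
    (A.charpoly).eval a = (a • (1 : Matrix (Fin 3) (Fin 3) ℂ) - A).det := by
  rw [Matrix.charpoly]
  have h1 : Polynomial.eval a (Matrix.charmatrix A).det
      = ((Matrix.charmatrix A).map (Polynomial.evalRingHom a)).det :=
    RingHom.map_det (Polynomial.evalRingHom a) (Matrix.charmatrix A)
  rw [h1]
  congr 1
  ext i j
  by_cases h : i = j
  · subst h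
    simp [Matrix.charmatrix_apply_eq, Matrix.one_apply]
  · simp [Matrix.charmatrix_apply_ne A i j h, Matrix.one_apply, h]

end ICSB

end InvariantConeAux

theorem invariant_cone_side_bound
    (B : Matrix (Fin 3) (Fin 3) ℝ) (lam : ℝ) (δ : ℂ)
    (hlam : 1 < lam) (him : 0 < δ.im) (habs : ‖δ‖ < lam)
    -- the eigenvalues of B̂ are λ, δ and δ̄ :
    (hchar : (B.map (Complex.ofReal)).charpoly =
      (X - C (lam : ℂ)) * (X - C δ) * (X - C ((starRingEnd ℂ) δ)))
    (η : ℝ) (hη : η = |Real.arctan ((1 - (δ / (lam : ℂ)).re) / (δ / (lam : ℂ)).im)|)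
    (hη1 : η ≤ 1)
    -- a fixed eigenvector v for λ :
    (v : Fin 3 → ℝ) (hv : v ≠ 0) (hveig : B.mulVec v = lam • v)
    (M : ℕ) (z : Fin M → Fin 3 → ℝ)
    -- (i) each zᵢ lies in the positive half-space E: its projection onto the λ-eigenline
    -- along the B̂-invariant complement (the kernel of B² - 2Re(δ)B + |δ|²I) is a
    -- positive multiple of v :
    (hE : ∀ i, ∃ r : ℝ, 0 < r ∧
      z i - r • v ∈ LinearMap.ker (Matrix.toLin'
        (B * B - (2 * δ.re) • B + ((‖δ‖) ^ 2) • (1 : Matrix (Fin 3) (Fin 3) ℝ))))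
    -- (ii) the conical hull Ĉ of the zᵢ is invariant under B̂ :
    (hinv : ∀ x ∈ {x : Fin 3 → ℝ | ∃ ε : Fin M → ℝ, (∀ i, 0 ≤ ε i) ∧ x = ∑ i, ε i • z i},
      B.mulVec x ∈ {x : Fin 3 → ℝ | ∃ ε : Fin M → ℝ, (∀ i, 0 ≤ ε i) ∧ x = ∑ i, ε i • z i})
    -- (iii) Ĉ is non-degenerate: the zᵢ span ℝ³ :
    (hspan : Submodule.span ℝ (Set.range z) = ⊤) :
    2 * Real.pi / (3 * η) ≤ (M : ℝ) := by
  classical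
  have hπ := Real.pi_pos
  have hlam0 : (0:ℝ) < lam := by linarith
  set t : ℂ := δ / (lam : ℂ) with htdef
  have hlamC : ((lam : ℝ) : ℂ) ≠ 0 := Complex.ofReal_ne_zero.mpr (ne_of_gt hlam0)
  have htim : 0 < t.im := by
    rw [htdef, Complex.div_ofReal_im]
    exact div_pos him hlam0
  have htabs : ‖t‖ < 1 := by
    rw [htdef, norm_div, Complex.norm_real, Real.norm_eq_abs, abs_of_pos hlam0]
    rw [div_lt_one hlam0]
    exact habs
  have htre : t.re < 1 := lt_of_le_of_lt (Complex.re_le_norm t) htabs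
  have hTEpos : 0 < (1 - t.re)/t.im := div_pos (by linarith) htim
  have hηeq : η = Real.arctan ((1 - t.re)/t.im) := by
    rw [hη]
    apply abs_of_nonneg
    have : (0:ℝ) = Real.arctan 0 := Real.arctan_zero.symm
    rw [this]
    exact Real.arctan_strictMono.monotone (le_of_lt hTEpos)
  -- a left eigenvector for δ
  set A : Matrix (Fin 3) (Fin 3) ℂ := B.map (Complex.ofReal) with hAdef
  have hdet : (δ • (1 : Matrix (Fin 3) (Fin 3) ℂ) - A).det = 0 := by
    rw [← ICSB.eval_charpoly_det A δ, hchar]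
    simp
  have hdetT : (δ • (1 : Matrix (Fin 3) (Fin 3) ℂ) - A.transpose).det = 0 := by
    have h1 : (δ • (1 : Matrix (Fin 3) (Fin 3) ℂ) - A).transpose
        = δ • (1 : Matrix (Fin 3) (Fin 3) ℂ) - A.transpose := by
      rw [Matrix.transpose_sub, Matrix.transpose_smul, Matrix.transpose_one]
    rw [← h1, Matrix.det_transpose]
    exact hdet
  obtain ⟨w, hw0, hww⟩ := Matrix.exists_mulVec_eq_zero_iff.mpr hdetT
  have hAtw : A.transpose.mulVec w = δ • w := by
    have h1 := hww
    rw [Matrix.sub_mulVec, Matrix.smul_mulVec, Matrix.one_mulVec, sub_eq_zero] at h1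
    exact h1.symm
  have hcol : ∀ l, (∑ k, ((B k l : ℝ) : ℂ) * w k) = δ * w l := by
    intro l
    have h1 := congrFun hAtw l
    simp only [Matrix.mulVec, dotProduct, Matrix.transpose_apply, Pi.smul_apply,
      smul_eq_mul, hAdef, Matrix.map_apply] at h1
    rw [← h1]
    all_goals (congr 1; funext k; ring)
  -- the complex linear functional
  set F : (Fin 3 → ℝ) → ℂ := fun x => ∑ k, w k * ((x k : ℝ) : ℂ) with hFdef
  have hFB : ∀ x : Fin 3 → ℝ, F (B.mulVec x) = δ * F x := by
    intro x
    simp only [hFdef, Matrix.mulVec, dotProduct]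
    push_cast
    calc ∑ k, w k * (∑ l, (B k l : ℂ) * (x l : ℂ))
        = ∑ k, ∑ l, w k * ((B k l : ℂ) * (x l : ℂ)) := by
          congr 1; funext k; rw [Finset.mul_sum]
    _ = ∑ l, ∑ k, w k * ((B k l : ℂ) * (x l : ℂ)) := Finset.sum_comm
    _ = ∑ l, (∑ k, ((B k l : ℝ):ℂ) * w k) * (x l : ℂ) := by
          congr 1; funext l; rw [Finset.sum_mul]; congr 1; funext k; ring
    _ = ∑ l, (δ * w l) * (x l : ℂ) := by
          congr 1; funext l; rw [hcol l]
    _ = δ * ∑ l, w l * (x l : ℂ) := by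
          rw [Finset.mul_sum]; congr 1; funext l; ring
  have hFsum : ∀ (ε : Fin M → ℝ), F (∑ j, ε j • z j) = ∑ j, (ε j : ℂ) * F (z j) := by
    intro ε
    simp only [hFdef, Finset.sum_apply, Pi.smul_apply, smul_eq_mul]
    push_cast
    calc ∑ k, w k * (∑ j, (ε j : ℂ) * (z j k : ℂ))
        = ∑ k, ∑ j, w k * ((ε j : ℂ) * (z j k : ℂ)) := by
          congr 1; funext k; rw [Finset.mul_sum]
    _ = ∑ j, ∑ k, w k * ((ε j : ℂ) * (z j k : ℂ)) := Finset.sum_comm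
    _ = ∑ j, (ε j : ℂ) * ∑ k, w k * (z j k : ℂ) := by
          congr 1; funext j; rw [Finset.mul_sum]; congr 1; funext k; ring
  -- some zᵢ has nonzero functional value, via the spanning hypothesis
  have hFnz : ∃ i, F (z i) ≠ 0 := by
    by_contra hall
    push_neg at hall
    set Fl : (Fin 3 → ℝ) →ₗ[ℝ] ℂ :=
      { toFun := F
        map_add' := by
          intro x y
          simp only [hFdef, Pi.add_apply]
          push_cast
          rw [← Finset.sum_add_distrib]
          congr 1; funext k; ring
        map_smul' := by
          intro a x
          simp only [hFdef, Pi.smul_apply, smul_eq_mul, RingHom.id_apply]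
          rw [Complex.real_smul, Finset.mul_sum]
          push_cast
          congr 1; funext k; ring } with hFldef
    have hsub : Set.range z ⊆ (LinearMap.ker Fl : Set (Fin 3 → ℝ)) := by
      rintro - ⟨i, rfl⟩
      exact hall i
    have htop : (⊤ : Submodule ℝ (Fin 3 → ℝ)) ≤ LinearMap.ker Fl := by
      rw [← hspan]
      exact Submodule.span_le.mpr hsub
    have hzero : ∀ x, Fl x = 0 := fun x => htop (Submodule.mem_top) 
    have hwk : ∀ k, w k = 0 := by
      intro k
      have h1 := hzero (Pi.single k 1)
      simp only [hFldef, LinearMap.coe_mk, AddHom.coe_mk, hFdef] at h1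
      rw [Finset.sum_eq_single k] at h1
      · simpa using h1
      · intro b _ hbk
        simp [Pi.single_apply, hbk]
      · intro hk
        exact absurd (Finset.mem_univ k) hk
    exact hw0 (funext hwk)
  -- the invariant-plane matrix
  set Qm : Matrix (Fin 3) (Fin 3) ℝ :=
    B * B - (2 * δ.re) • B + ((‖δ‖) ^ 2) • (1 : Matrix (Fin 3) (Fin 3) ℝ) with hQmdef
  choose r hr0 hrk using hE
  have hker : ∀ i, Qm.mulVec (z i - r i • v) = 0 := by
    intro i
    have h1 := hrk i
    rw [LinearMap.mem_ker, Matrix.toLin'_apply] at h1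
    exact h1
  set cq : ℝ := lam^2 - 2*δ.re*lam + (‖δ‖)^2 with hcqdef
  have hcqpos : 0 < cq := by
    have h1 : (‖δ‖)^2 = δ.re^2 + δ.im^2 := by
      rw [Complex.sq_norm, Complex.normSq_apply]; ring
    rw [hcqdef, h1]
    nlinarith [him, sq_nonneg (lam - δ.re), mul_pos him him]
  have hQv : Qm.mulVec v = cq • v := by
    rw [hQmdef, Matrix.add_mulVec, Matrix.sub_mulVec]
    rw [Matrix.smul_mulVec, Matrix.smul_mulVec, Matrix.one_mulVec]
    rw [← Matrix.mulVec_mulVec, hveig, Matrix.mulVec_smul, hveig]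
    rw [hcqdef]
    simp only [smul_smul]
    rw [← sub_smul, ← add_smul]
    congr 1
    ring
  have hsv : ∀ s : ℝ, s • v = 0 → s = 0 := by
    intro s hs
    by_contra hne
    apply hv
    funext k
    have h1 := congrFun hs k
    simp only [Pi.smul_apply, smul_eq_mul, Pi.zero_apply] at h1
    rcases mul_eq_zero.mp h1 with h | h
    · exact absurd h hne
    · exact h
  have hmvsum : ∀ (N : Matrix (Fin 3) (Fin 3) ℝ) (ε : Fin M → ℝ) (u : Fin M → Fin 3 → ℝ),
      N.mulVec (∑ j, ε j • u j) = ∑ j, ε j • N.mulVec (u j) := by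
    intro N ε u
    calc N.mulVec (∑ j, ε j • u j) = N.mulVecLin (∑ j, ε j • u j) :=
          (Matrix.mulVecLin_apply N _).symm
    _ = ∑ j, N.mulVecLin (ε j • u j) := map_sum _ _ _
    _ = ∑ j, ε j • N.mulVec (u j) := by
          apply Finset.sum_congr rfl
          intro j _
          rw [LinearMap.map_smul, Matrix.mulVecLin_apply]
  have hcommQB : Qm * B = B * Qm := by
    simp only [hQmdef, add_mul, mul_add, sub_mul, mul_sub, smul_mul_assoc, mul_smul_comm,
      one_mul, mul_one, mul_assoc]
  have hQBp : ∀ p : Fin 3 → ℝ, Qm.mulVec p = 0 → Qm.mulVec (B.mulVec p) = 0 := by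
    intro p hp
    rw [Matrix.mulVec_mulVec, hcommQB, ← Matrix.mulVec_mulVec, hp, Matrix.mulVec_zero]
  have hzdecomp : ∀ i, r i • v + (z i - r i • v) = z i := fun i => by abel
  have hQz : ∀ i, Qm.mulVec (z i) = (r i * cq) • v := by
    intro i
    rw [← hzdecomp i, Matrix.mulVec_add, Matrix.mulVec_smul, hQv, hker i, add_zero, smul_smul]
  have hQBz : ∀ i, Qm.mulVec (B.mulVec (z i)) = (lam * r i * cq) • v := by
    intro i
    rw [← hzdecomp i, Matrix.mulVec_add B, Matrix.mulVec_smul B, hveig]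
    rw [Matrix.mulVec_add Qm, Matrix.mulVec_smul Qm, Matrix.mulVec_smul Qm, hQv,
      hQBp _ (hker i), add_zero, smul_smul, smul_smul]
    congr 1
    ring
  have hreq : ∀ (i : Fin M) (ε : Fin M → ℝ), B.mulVec (z i) = ∑ j, ε j • z j →
      lam * r i = ∑ j, ε j * r j := by
    intro i ε heq
    have h1 : Qm.mulVec (B.mulVec (z i)) = (lam * r i * cq) • v := hQBz i
    have h2 : Qm.mulVec (∑ j, ε j • z j) = ((∑ j, ε j * r j) * cq) • v := by
      rw [hmvsum]
      calc ∑ j, ε j • Qm.mulVec (z j) = ∑ j, ε j • ((r j * cq) • v) := by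
            apply Finset.sum_congr rfl
            intro j _
            rw [hQz j]
      _ = ∑ j, ((ε j * (r j * cq)) • v) := by
            apply Finset.sum_congr rfl
            intro j _
            rw [smul_smul]
      _ = (∑ j, ε j * (r j * cq)) • v := by rw [Finset.sum_smul]
      _ = ((∑ j, ε j * r j) * cq) • v := by
            congr 1
            rw [Finset.sum_mul]
            apply Finset.sum_congr rfl
            intro j _
            ring
    rw [heq, h2] at h1
    have h3 : ((∑ j, ε j * r j) * cq - lam * r i * cq) • v = 0 := by
      rw [sub_smul, h1, sub_self]
    have h4 := hsv _ h3
    have h5 : ((∑ j, ε j * r j) - lam * r i) * cq = 0 := by linear_combination h4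
    rcases mul_eq_zero.mp h5 with h | h
    · linarith
    · exact absurd h (ne_of_gt hcqpos)
  -- planar points
  set ζ : Fin M → ℂ := fun i => F (z i) / ((r i : ℝ) : ℂ) with hζdef
  have hζnz : ∃ i, ζ i ≠ 0 := by
    obtain ⟨i, hi⟩ := hFnz
    refine ⟨i, ?_⟩
    rw [hζdef]
    exact div_ne_zero hi (Complex.ofReal_ne_zero.mpr (ne_of_gt (hr0 i)))
  have hconv : ∀ i, ∃ μ : Fin M → ℝ, (∀ j, 0 ≤ μ j) ∧ (∑ j, μ j) = 1 ∧
      t * ζ i = ∑ j, ((μ j : ℝ) : ℂ) * ζ j := by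
    intro i
    have hzi_mem : z i ∈ {x : Fin 3 → ℝ |
        ∃ ε : Fin M → ℝ, (∀ i, 0 ≤ ε i) ∧ x = ∑ i, ε i • z i} := by
      refine ⟨fun j => if j = i then 1 else 0, ?_, ?_⟩
      · intro j
        dsimp only
        split <;> norm_num
      · have hterm : ∀ j : Fin M, (if j = i then (1:ℝ) else 0) • z j
            = if j = i then z j else 0 := by
          intro j; split <;> simp
        dsimp only
        rw [Finset.sum_congr rfl (fun j _ => hterm j), Finset.sum_ite_eq' Finset.univ i z]
        simp
    obtain ⟨ε, hε0, hεeq⟩ := hinv (z i) hzi_mem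
    have hrsum : lam * r i = ∑ j, ε j * r j := hreq i ε hεeq
    have hFδ : δ * F (z i) = ∑ j, (ε j : ℂ) * F (z j) := by
      rw [← hFB (z i), hεeq, hFsum]
    have hri : ((r i : ℝ):ℂ) ≠ 0 := Complex.ofReal_ne_zero.mpr (ne_of_gt (hr0 i))
    refine ⟨fun j => ε j * r j / (lam * r i), ?_, ?_, ?_⟩
    · intro j
      dsimp only
      exact div_nonneg (mul_nonneg (hε0 j) (le_of_lt (hr0 j)))
        (le_of_lt (mul_pos hlam0 (hr0 i)))
    · dsimp only
      rw [← Finset.sum_div, ← hrsum, div_self]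
      exact ne_of_gt (mul_pos hlam0 (hr0 i))
    · have hterm : ∀ j, ((ε j * r j / (lam * r i) : ℝ) : ℂ) * ζ j
          = (ε j : ℂ) * F (z j) / (((lam : ℝ):ℂ) * ((r i : ℝ):ℂ)) := by
        intro j
        have hrj : ((r j : ℝ):ℂ) ≠ 0 := Complex.ofReal_ne_zero.mpr (ne_of_gt (hr0 j))
        rw [hζdef]
        push_cast
        field_simp
        all_goals ring
      rw [Finset.sum_congr rfl (fun j _ => hterm j)]
      rw [htdef, hζdef]
      dsimp only
      rw [← Finset.sum_div, ← hFδ]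
      field_simp
      all_goals ring
  have hplanar := ICSB.planar_bound t htim htre (by rw [← hηeq]; exact hη1) M ζ hζnz hconv
  rw [← hηeq] at hplanar
  have hπ3 : (3:ℝ) < Real.pi := by
    have := Real.pi_gt_d6
    linarith
  have hηpos : 0 < η := by
    rw [hηeq]
    simpa using Real.arctan_strictMono hTEpos
  rw [div_le_iff₀ (by positivity)]
  nlinarith [hplanar, hπ3, hη1, hηpos]
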